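/- If p₁, ..., p_k are distinct primes, then the field extension ℚ(√p₁, ..., √p_k) has degree exactly 2^k over ℚ. -/

import Mathlib

open IntermediateField Polynomial

set_option maxHeartbeats 1000000
set_option synthInstance.maxHeartbeats 1000000
-- degree two lemma
lemma deg2 (K : IntermediateField ℚ ℝ) {x : ℝ} (hx : x ^ 2 ∈ K) (hxK : x ∉ K) :
    Module.finrank K (IntermediateField.adjoin K {x}) = 2 := by
  set c : K := ⟨x ^ 2, hx⟩ with hc
  have hmon : (X ^ 2 - C c).Monic := monic_X_pow_sub_C c (by norm_num)
  have haev : Polynomial.aeval x (X ^ 2 - C c : K[X]) = 0 := by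
    simp [hc]
  have hint : IsIntegral K x := ⟨X ^ 2 - C c, hmon, by simpa using haev⟩
  have hirr : Irreducible (X ^ 2 - C c : K[X]) := by
    apply X_pow_sub_C_irreducible_of_prime Nat.prime_two
    intro b hb
    have : (b : ℝ) ^ 2 = x ^ 2 := by
      have := congrArg (Subtype.val) hb
      push_cast at this ⊢
      simpa [hc] using this
    rcases sq_eq_sq_iff_eq_or_eq_neg.mp this with h | h
    · exact hxK (h ▸ b.2)
    · exact hxK (by rw [show x = -(b:ℝ) by rw [h]; ring]; exact neg_mem b.2)
  have := minpoly.eq_of_irreducible_of_monic hirr haev hmon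
  rw [IntermediateField.adjoin.finrank hint, ← this, natDegree_X_pow_sub_C]

lemma rep (K : IntermediateField ℚ ℝ) {x : ℝ} (hx : x ^ 2 ∈ K) (hxK : x ∉ K)
    {y : ℝ} (hy : y ∈ IntermediateField.adjoin K {x}) :
    ∃ a b : ℝ, a ∈ K ∧ b ∈ K ∧ y = a + b * x := by
  induction hy using IntermediateField.adjoin_induction with
  | mem z hz =>
    rw [Set.mem_singleton_iff] at hz
    exact ⟨0, 1, K.zero_mem, K.one_mem, by rw [hz]; ring⟩
  | algebraMap r => exact ⟨r, 0, r.2, K.zero_mem, by simp⟩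
  | add u v hu hv ihu ihv =>
    obtain ⟨a, b, ha, hb, rfl⟩ := ihu
    obtain ⟨a', b', ha', hb', rfl⟩ := ihv
    exact ⟨a + a', b + b', K.add_mem ha ha', K.add_mem hb hb', by ring⟩
  | mul u v hu hv ihu ihv =>
    obtain ⟨a, b, ha, hb, rfl⟩ := ihu
    obtain ⟨a', b', ha', hb', rfl⟩ := ihv
    exact ⟨a * a' + b * b' * x ^ 2, a * b' + a' * b,
      K.add_mem (K.mul_mem ha ha') (K.mul_mem (K.mul_mem hb hb') hx),
      K.add_mem (K.mul_mem ha hb') (K.mul_mem ha' hb), by ring⟩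
  | inv u hu ihu =>
    obtain ⟨a, b, ha, hb, rfl⟩ := ihu
    by_cases h0 : a + b * x = 0
    · exact ⟨a, b, ha, hb, by rw [h0]; simp [h0]⟩
    · have hd : a ^ 2 - b ^ 2 * x ^ 2 ≠ 0 := by
        intro hd
        have : (a + b * x) * (a - b * x) = 0 := by ring_nf; linarith [hd]
        rcases mul_eq_zero.mp this with h | h
        · exact h0 h
        · by_cases hb0 : b = 0
          · exact h0 (by rw [hb0] at h ⊢; simpa using h)
          · apply hxK
            have : x = a / b := by field_simp; linarith [h]
            rw [this]; exact K.div_mem ha hb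
      refine ⟨a / (a ^ 2 - b ^ 2 * x ^ 2), -b / (a ^ 2 - b ^ 2 * x ^ 2),
        K.div_mem ha (K.sub_mem (K.pow_mem ha 2) (K.mul_mem (K.pow_mem hb 2) hx)),
        K.div_mem (K.neg_mem hb) (K.sub_mem (K.pow_mem ha 2) (K.mul_mem (K.pow_mem hb 2) hx)), ?_⟩
      symm
      apply eq_inv_of_mul_eq_one_left
      have h2 : (a + b * x) * (a / (a ^ 2 - b ^ 2 * x ^ 2) + -b / (a ^ 2 - b ^ 2 * x ^ 2) * x)
          = (a ^ 2 - b ^ 2 * x ^ 2) / (a ^ 2 - b ^ 2 * x ^ 2) := by ring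
      exact (mul_comm _ _).trans (h2.trans (div_self hd))

lemma key : ∀ k : ℕ, ∀ p : Fin k → ℕ, (∀ i, (p i).Prime) → Function.Injective p →
    ∀ m : ℕ, Squarefree m → 1 < m → (∀ i, ¬ p i ∣ m) →
    Real.sqrt m ∉ IntermediateField.adjoin ℚ (Set.range fun i => Real.sqrt (p i)) := by
  intro k
  induction k with
  | zero =>
    intro p hp hinj m hsf hm hdvd hmem
    rw [Set.range_eq_empty, IntermediateField.adjoin_empty, IntermediateField.mem_bot] at hmem
    obtain ⟨q, hq⟩ := hmem
    have : Irrational (Real.sqrt m) := by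
      apply irrational_nrt_of_notint_nrt 2 m _ _ (by norm_num)
      · rw [Real.sq_sqrt (by positivity)]; push_cast; ring
      · rintro ⟨y, hy⟩
        have hy2 : (y:ℝ) ^ 2 = (m:ℝ) := by
          rw [← hy, Real.sq_sqrt (by positivity)]
        have hy2' : y ^ 2 = (m : ℤ) := by exact_mod_cast hy2
        have hna : y.natAbs ^ 2 = m := by
          have := congrArg Int.natAbs hy2'
          simpa [Int.natAbs_pow] using this
        have hu : IsUnit y.natAbs := hsf y.natAbs (by rw [← hna]; ring_nf; exact dvd_rfl)
        have h1 : y.natAbs = 1 := Nat.isUnit_iff.mp hu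
        rw [h1] at hna; simp at hna; omega
    exact this ⟨q, hq⟩
  | succ k ih =>
    intro p hp hinj m hsf hm hdvd hmem
    set P := p 0 with hP
    set q : Fin k → ℕ := p ∘ Fin.succ with hq
    have hqp : ∀ i, (q i).Prime := fun i => hp _
    have hqinj : Function.Injective q := hinj.comp (Fin.succ_injective k)
    set K : IntermediateField ℚ ℝ :=
      IntermediateField.adjoin ℚ (Set.range fun i => Real.sqrt (q i)) with hK
    have hPK : Real.sqrt P ∉ K := by
      apply ih q hqp hqinj P (hp 0).squarefree (hp 0).one_lt
      intro i hdvd'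
      exact (Fin.succ_ne_zero i) (hinj ((Nat.prime_dvd_prime_iff_eq (hqp i) (hp 0)).mp hdvd'))
    have hP2 : Real.sqrt P ^ 2 ∈ K := by
      rw [Real.sq_sqrt (by positivity)]
      exact_mod_cast K.intCast_mem P -- natCast
    -- rewrite membership
    have hmem' : Real.sqrt m ∈ IntermediateField.adjoin K {Real.sqrt P} := by
      have hrange : (Set.range fun i : Fin (k+1) => Real.sqrt (p i)) =
          (Set.range fun i : Fin k => Real.sqrt (q i)) ∪ {Real.sqrt P} := by
        rw [Set.union_singleton]
        exact Fin.range_fin_succ _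
      rw [hrange, ← IntermediateField.adjoin_adjoin_left] at hmem
      exact hmem
    obtain ⟨a, b, ha, hb, hab⟩ := rep K hP2 hPK hmem'
    have hsqm : (m : ℝ) = a ^ 2 + b ^ 2 * P + 2 * a * b * Real.sqrt P := by
      have := congrArg (· ^ 2) hab
      rw [Real.sq_sqrt (by positivity : (0:ℝ) ≤ (m:ℝ))] at this
      rw [this]
      have : Real.sqrt P ^ 2 = (P : ℝ) := Real.sq_sqrt (by positivity)
      nlinarith [this]
    by_cases hb0 : b = 0
    · apply ih q hqp hqinj m hsf hm (fun i => hdvd i.succ)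
      rw [hab, hb0]; simpa using ha
    by_cases ha0 : a = 0
    · -- sqrt m = b * sqrt P, so sqrt (m*P) = b * P ∈ K
      have hmP : Real.sqrt ((m * P : ℕ) : ℝ) = b * P := by
        push_cast
        rw [Real.sqrt_mul (by positivity), hab, ha0]
        rw [zero_add, mul_assoc, Real.mul_self_sqrt (by positivity)]
      apply ih q hqp hqinj (m * P)
      · exact (Nat.squarefree_mul (((hp 0).coprime_iff_not_dvd.mpr (hdvd 0)).symm)).mpr ⟨hsf, (hp 0).squarefree⟩
      · exact one_lt_mul_of_lt_of_le hm (hp 0).one_lt.le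
      · intro i hdvd'
        rcases (hqp i).dvd_mul.mp hdvd' with h | h
        · exact hdvd i.succ h
        · exact (Fin.succ_ne_zero i) (hinj ((Nat.prime_dvd_prime_iff_eq (hqp i) (hp 0)).mp h))
      · rw [hmP]
        exact K.mul_mem hb (by exact_mod_cast K.intCast_mem P)
    · -- both nonzero: sqrt P ∈ K
      apply hPK
      have h2ab : (2 : ℝ) * a * b ≠ 0 := by positivity
      have : Real.sqrt P = ((m : ℝ) - a ^ 2 - b ^ 2 * P) / (2 * a * b) := by
        field_simp
        linarith [hsqm]
      rw [this]
      apply K.div_mem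
      · exact K.sub_mem (K.sub_mem (by exact_mod_cast K.intCast_mem m) (K.pow_mem ha 2))
          (K.mul_mem (K.pow_mem hb 2) (by exact_mod_cast K.intCast_mem P))
      · exact K.mul_mem (K.mul_mem (by exact_mod_cast K.intCast_mem 2) ha) hb

theorem ussr_stmt_4 (k : ℕ) (p : Fin k → ℕ) (hp : ∀ i, (p i).Prime)
    (hinj : Function.Injective p) :
    Module.finrank ℚ
      (IntermediateField.adjoin ℚ (Set.range fun i => Real.sqrt (p i))) = 2 ^ k := by
  induction k with
  | zero =>
    rw [Set.range_eq_empty, IntermediateField.adjoin_empty, pow_zero]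
    exact IntermediateField.finrank_bot
  | succ k ih =>
    set P := p 0 with hPdef
    set q : Fin k → ℕ := p ∘ Fin.succ with hq
    have hqp : ∀ i, (q i).Prime := fun i => hp _
    have hqinj : Function.Injective q := hinj.comp (Fin.succ_injective k)
    set K : IntermediateField ℚ ℝ :=
      IntermediateField.adjoin ℚ (Set.range fun i => Real.sqrt (q i)) with hK
    have hPK : Real.sqrt P ∉ K := by
      apply key k q hqp hqinj P (hp 0).squarefree (hp 0).one_lt
      intro i hdvd'
      exact (Fin.succ_ne_zero i) (hinj ((Nat.prime_dvd_prime_iff_eq (hqp i) (hp 0)).mp hdvd'))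
    have hP2 : Real.sqrt P ^ 2 ∈ K := by
      rw [Real.sq_sqrt (by positivity)]
      exact_mod_cast K.intCast_mem P
    have hrange : (Set.range fun i : Fin (k+1) => Real.sqrt (p i)) =
        (Set.range fun i : Fin k => Real.sqrt (q i)) ∪ {Real.sqrt P} := by
      rw [Set.union_singleton]
      exact Fin.range_fin_succ _
    rw [hrange, ← IntermediateField.adjoin_adjoin_left]
    have h2 : Module.finrank K (IntermediateField.adjoin K {Real.sqrt P}) = 2 :=
      deg2 K hP2 hPK
    have htower : Module.finrank ℚ K *
        Module.finrank K (IntermediateField.adjoin K {Real.sqrt P}) =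
        Module.finrank ℚ (IntermediateField.adjoin K {Real.sqrt P}) :=
      Module.finrank_mul_finrank ℚ K _
    have : Module.finrank ℚ
        ((IntermediateField.adjoin K {Real.sqrt P}).restrictScalars ℚ) =
        Module.finrank ℚ (IntermediateField.adjoin K {Real.sqrt P}) := rfl
    change Module.finrank ℚ ((IntermediateField.adjoin K {Real.sqrt P}).restrictScalars ℚ) = 2 ^ (k+1)
    rw [this, ← htower, h2, ih q hqp hqinj]
    ring
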